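/- Let q = p^n with p an odd prime, and let x, y, z, t satisfy y^q - y = 1/(x^q - x), z^q - z = x^{q+1}/(x^q - x), t^q - t = (x^q + x)/(x^q - x). Then the substitution x' = -1/x, y' = z, z' = y, t' = -t satisfies the same three equations. -/

import Mathlib

theorem stmt17 (p n q : ℕ) [Fact p.Prime] (hp : p ≠ 2) (hn : 0 < n) (hq : q = p ^ n)
    (L : Type) [Field L] [CharP L p]
    (x y z t : L) (hx0 : x ≠ 0) (hx : x ^ q - x ≠ 0)
    (hy : y ^ q - y = 1 / (x ^ q - x))
    (hz : z ^ q - z = x ^ (q + 1) / (x ^ q - x))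
    (ht : t ^ q - t = (x ^ q + x) / (x ^ q - x)) :
    z ^ q - z = 1 / ((-1 / x) ^ q - (-1 / x)) ∧
    y ^ q - y = (-1 / x) ^ (q + 1) / ((-1 / x) ^ q - (-1 / x)) ∧
    (-t) ^ q - (-t) = ((-1 / x) ^ q + (-1 / x)) / ((-1 / x) ^ q - (-1 / x)) := by
  have hodd : Odd q := by
    rw [hq]; exact ((Fact.out : p.Prime).odd_of_ne_two hp).pow
  have hxq : x ^ q ≠ 0 := pow_ne_zero _ hx0
  have h1 : (-1 / x) ^ q = -1 / x ^ q := by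
    rw [div_pow, hodd.neg_one_pow]
  have hden : (-1 / x) ^ q - (-1 / x) = (x ^ q - x) / (x * x ^ q) := by
    rw [h1]; field_simp; ring
  have hden0 : (-1 / x) ^ q - (-1 / x) ≠ 0 := by
    rw [hden]; exact div_ne_zero hx (mul_ne_zero hx0 hxq)
  have hxq1 : x ^ (q + 1) = x * x ^ q := by rw [pow_succ]; ring
  refine ⟨?_, ?_, ?_⟩
  · rw [hz, hden, one_div_div, hxq1]
  · rw [hy, hden, pow_succ, h1]
    field_simp
  · rw [hden, h1]
    have : (-t) ^ q = -(t ^ q) := hodd.neg_pow t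
    rw [this]
    field_simp
    field_simp at ht
    linear_combination (-1 : L) * ht
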